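/- Let b_0, b_1, ..., b_5 be complex numbers with b_1 b_2 b_3 b_4 b_5 ≠ 0. The quintic polynomial W = b_1 x_1^5 + b_2 x_2^5 + b_3 x_3^5 + b_4 x_4^5 + b_5 x_5^5 + b_0 x_1 x_2 x_3 x_4 x_5 has a critical point (a point where all five partial derivatives ∂W/∂x_i vanish) with all coordinates x_i nonzero in ℂ^5 if and only if b_0^5 + 5^5 b_1 b_2 b_3 b_4 b_5 = 0. -/

import Mathlib

/-- The quintic `W = b₁x₁⁵ + ⋯ + b₅x₅⁵ + b₀x₁x₂x₃x₄x₅` has a critical point with all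
coordinates nonzero iff `b₀⁵ + 5⁵ b₁b₂b₃b₄b₅ = 0`. -/
theorem stmt_2 (b0 b1 b2 b3 b4 b5 : ℂ) (h : b1 * b2 * b3 * b4 * b5 ≠ 0) :
    (∃ x1 x2 x3 x4 x5 : ℂ,
      x1 ≠ 0 ∧ x2 ≠ 0 ∧ x3 ≠ 0 ∧ x4 ≠ 0 ∧ x5 ≠ 0 ∧
      5 * b1 * x1 ^ 4 + b0 * (x2 * x3 * x4 * x5) = 0 ∧
      5 * b2 * x2 ^ 4 + b0 * (x1 * x3 * x4 * x5) = 0 ∧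
      5 * b3 * x3 ^ 4 + b0 * (x1 * x2 * x4 * x5) = 0 ∧
      5 * b4 * x4 ^ 4 + b0 * (x1 * x2 * x3 * x5) = 0 ∧
      5 * b5 * x5 ^ 4 + b0 * (x1 * x2 * x3 * x4) = 0) ↔
    b0 ^ 5 + 5 ^ 5 * (b1 * b2 * b3 * b4 * b5) = 0 := by
  have hb1 : b1 ≠ 0 := fun hb => h (by simp [hb])
  have hb2 : b2 ≠ 0 := fun hb => h (by simp [hb])
  have hb3 : b3 ≠ 0 := fun hb => h (by simp [hb])
  have hb4 : b4 ≠ 0 := fun hb => h (by simp [hb])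
  have hb5 : b5 ≠ 0 := fun hb => h (by simp [hb])
  constructor
  · rintro ⟨x1, x2, x3, x4, x5, hx1, hx2, hx3, hx4, hx5, h1, h2, h3, h4, h5⟩
    have hP : (x1 * x2 * x3 * x4 * x5) ^ 4 ≠ 0 :=
      pow_ne_zero _ (mul_ne_zero (mul_ne_zero (mul_ne_zero (mul_ne_zero hx1 hx2) hx3) hx4) hx5)
    have key : (b0 ^ 5 + 5 ^ 5 * (b1 * b2 * b3 * b4 * b5)) * (x1 * x2 * x3 * x4 * x5) ^ 4 = 0 := by
      linear_combination
        ((5*b2*x2^4)*(5*b3*x3^4)*(5*b4*x4^4)*(5*b5*x5^4)) * h1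
        + ((-(b0*(x2*x3*x4*x5)))*(5*b3*x3^4)*(5*b4*x4^4)*(5*b5*x5^4)) * h2
        + ((-(b0*(x2*x3*x4*x5)))*(-(b0*(x1*x3*x4*x5)))*(5*b4*x4^4)*(5*b5*x5^4)) * h3
        + ((-(b0*(x2*x3*x4*x5)))*(-(b0*(x1*x3*x4*x5)))*(-(b0*(x1*x2*x4*x5)))*(5*b5*x5^4)) * h4
        + ((-(b0*(x2*x3*x4*x5)))*(-(b0*(x1*x3*x4*x5)))*(-(b0*(x1*x2*x4*x5)))*(-(b0*(x1*x2*x3*x5)))) * h5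
    exact (mul_eq_zero.mp key).resolve_right hP
  · intro hb
    have hb0 : b0 ≠ 0 := by
      intro h0
      rw [h0] at hb
      norm_num at hb
      rcases hb with ((((e|e)|e)|e)|e) <;> exact h (by simp [e])
    obtain ⟨y2, hy2⟩ := Complex.isAlgClosed.exists_pow_nat_eq b2⁻¹ (by norm_num : 0 < 5)
    obtain ⟨y3, hy3⟩ := Complex.isAlgClosed.exists_pow_nat_eq b3⁻¹ (by norm_num : 0 < 5)
    obtain ⟨y4, hy4⟩ := Complex.isAlgClosed.exists_pow_nat_eq b4⁻¹ (by norm_num : 0 < 5)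
    obtain ⟨y5, hy5⟩ := Complex.isAlgClosed.exists_pow_nat_eq b5⁻¹ (by norm_num : 0 < 5)
    have hy2n : y2 ≠ 0 := fun h0 => hb2 (inv_eq_zero.mp (by simpa [h0] using hy2.symm))
    have hy3n : y3 ≠ 0 := fun h0 => hb3 (inv_eq_zero.mp (by simpa [h0] using hy3.symm))
    have hy4n : y4 ≠ 0 := fun h0 => hb4 (inv_eq_zero.mp (by simpa [h0] using hy4.symm))
    have hy5n : y5 ≠ 0 := fun h0 => hb5 (inv_eq_zero.mp (by simpa [h0] using hy5.symm))
    have hz2 : b2 * y2 ^ 5 = 1 := by rw [hy2]; exact mul_inv_cancel₀ hb2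
    have hz3 : b3 * y3 ^ 5 = 1 := by rw [hy3]; exact mul_inv_cancel₀ hb3
    have hz4 : b4 * y4 ^ 5 = 1 := by rw [hy4]; exact mul_inv_cancel₀ hb4
    have hz5 : b5 * y5 ^ 5 = 1 := by rw [hy5]; exact mul_inv_cancel₀ hb5
    set x1 : ℂ := -5 / (b0 * (y2 * y3 * y4 * y5)) with hx1def
    have hQ : b0 * (y2 * y3 * y4 * y5) ≠ 0 :=
      mul_ne_zero hb0 (mul_ne_zero (mul_ne_zero (mul_ne_zero hy2n hy3n) hy4n) hy5n)
    have hx1n : x1 ≠ 0 := by rw [hx1def]; exact div_ne_zero (by norm_num) hQ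
    have hP : b0 * (x1 * y2 * y3 * y4 * y5) = -5 := by
      rw [hx1def]; field_simp
    have key : b1 * (-5 : ℂ) ^ 5 = (b0 * (y2 * y3 * y4 * y5)) ^ 5 := by
      have e : (b0 * (y2 * y3 * y4 * y5)) ^ 5 = b0 ^ 5 * (y2 ^ 5 * (y3 ^ 5 * (y4 ^ 5 * y5 ^ 5))) := by
        ring
      rw [e, hy2, hy3, hy4, hy5]
      field_simp
      linear_combination -hb
    have hk1 : b1 * x1 ^ 5 = 1 := by
      rw [hx1def, div_pow, mul_div_assoc']
      exact (div_eq_one_iff_eq (pow_ne_zero 5 hQ)).mpr key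
    have e1 : x1 * (5 * b1 * x1 ^ 4 + b0 * (y2 * y3 * y4 * y5)) = 0 := by
      linear_combination 5 * hk1 + hP
    have e2 : y2 * (5 * b2 * y2 ^ 4 + b0 * (x1 * y3 * y4 * y5)) = 0 := by
      linear_combination 5 * hz2 + hP
    have e3 : y3 * (5 * b3 * y3 ^ 4 + b0 * (x1 * y2 * y4 * y5)) = 0 := by
      linear_combination 5 * hz3 + hP
    have e4 : y4 * (5 * b4 * y4 ^ 4 + b0 * (x1 * y2 * y3 * y5)) = 0 := by
      linear_combination 5 * hz4 + hP
    have e5 : y5 * (5 * b5 * y5 ^ 4 + b0 * (x1 * y2 * y3 * y4)) = 0 := by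
      linear_combination 5 * hz5 + hP
    exact ⟨x1, y2, y3, y4, y5, hx1n, hy2n, hy3n, hy4n, hy5n,
      (mul_eq_zero.mp e1).resolve_left hx1n,
      (mul_eq_zero.mp e2).resolve_left hy2n,
      (mul_eq_zero.mp e3).resolve_left hy3n,
      (mul_eq_zero.mp e4).resolve_left hy4n,
      (mul_eq_zero.mp e5).resolve_left hy5n⟩
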